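/- Fix a subset I of the real interval [0,1] satisfying the descending chain condition and a positive real number α. Then there exists a finite subset I_0 ⊆ I, depending only on I and α, with the following property: whenever ℓ is a positive integer, k_1, ..., k_ℓ are positive integers, and i_1, ..., i_ℓ are elements of I \ {0} such that Σ_{j=1}^ℓ k_j · i_j = α, then i_j ∈ I_0 for all j = 1, ..., ℓ. -/

import Mathlib

/-- A set of real numbers satisfies the descending chain condition (DCC) if it
contains no infinite strictly decreasing sequence. -/
def SatisfiesDCC (S : Set ℝ) : Prop :=
  ¬ ∃ f : ℕ → ℝ, (∀ n, f n ∈ S) ∧ ∀ n, f (n + 1) < f n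

/-- Key lemma: sums of multisets of at most `N` elements of `I \ {0}` admit no
infinite strictly decreasing sequence, provided `I ⊆ [0,1]` is PWO. -/
lemma no_descending_sums (I : Set ℝ) (hI : I ⊆ Set.Icc 0 1) (hPWO : I.IsPWO) (N : ℕ) :
    ¬ ∃ f : ℕ → ℝ,
        (∀ n, ∃ M : Multiset ℝ, (∀ x ∈ M, x ∈ I ∧ x ≠ 0) ∧ M.card ≤ N ∧ M.sum = f n) ∧
        ∀ n, f (n + 1) < f n := by
  induction N with
  | zero =>
    rintro ⟨f, hf, hlt⟩
    obtain ⟨M0, -, hc0, hs0⟩ := hf 0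
    obtain ⟨M1, -, hc1, hs1⟩ := hf 1
    rw [Nat.le_zero, Multiset.card_eq_zero] at hc0 hc1
    subst hc0; subst hc1
    have := hlt 0
    rw [← hs0, ← hs1] at this
    simp at this
  | succ N ih =>
    rintro ⟨f, hf, hlt⟩
    choose M hM hcard hsum using hf
    have hxpos : ∀ n, ∀ x ∈ M n, (0:ℝ) < x := by
      intro n x hx
      have h1 := (hM n x hx).1
      have h2 := (hM n x hx).2
      have := (hI h1).1
      exact lt_of_le_of_ne this (Ne.symm h2)
    have hfnonneg : ∀ n, 0 ≤ f n := by
      intro n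
      rw [← hsum n]
      exact Multiset.sum_nonneg fun x hx => (hxpos n x hx).le
    have hfpos : ∀ n, 0 < f n := fun n => lt_of_le_of_lt (hfnonneg (n + 1)) (hlt n)
    have hne : ∀ n, M n ≠ 0 := by
      intro n h0
      have := hsum n
      rw [h0] at this
      simp at this
      exact absurd this.symm (ne_of_gt (hfpos n))
    choose b hb using fun n => Multiset.exists_mem_of_ne_zero (hne n)
    have hbI : ∀ n, b n ∈ I := fun n => (hM n (b n) (hb n)).1
    obtain ⟨g, hg⟩ := hPWO.exists_monotone_subseq hbI
    have hanti : StrictAnti f := strictAnti_nat_of_succ_lt hlt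
    apply ih
    refine ⟨fun n => f (g n) - b (g n), ?_, ?_⟩
    · intro n
      refine ⟨(M (g n)).erase (b (g n)), ?_, ?_, ?_⟩
      · intro x hx
        exact hM _ x (Multiset.mem_of_mem_erase hx)
      · have h1 := Multiset.card_erase_of_mem (hb (g n))
        rw [Nat.pred_eq_sub_one] at h1
        have h0 : 0 < Multiset.card (M (g n)) := Multiset.card_pos.mpr (hne (g n))
        have h2 := hcard (g n)
        omega
      · have h1 := Multiset.cons_erase (hb (g n))
        have h2 : ((b (g n)) ::ₘ (M (g n)).erase (b (g n))).sum = (M (g n)).sum := by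
          rw [h1]
        rw [Multiset.sum_cons, hsum] at h2
        show ((M (g n)).erase (b (g n))).sum = f (g n) - b (g n)
        linarith
    · intro n
      have h1 : f (g (n + 1)) < f (g n) := hanti (g.strictMono (Nat.lt_succ_self n))
      have h2 : b (g n) ≤ b (g (n + 1)) := hg (Nat.le_succ n)
      show f (g (n + 1)) - b (g (n + 1)) < f (g n) - b (g n)
      linarith

theorem finite_subset_of_sum_eq (I : Set ℝ) (hI : I ⊆ Set.Icc 0 1)
    (hDCC : SatisfiesDCC I) (α : ℝ) (hα : 0 < α) :
    ∃ I₀ : Set ℝ, I₀ ⊆ I ∧ I₀.Finite ∧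
      ∀ (ℓ : ℕ), 0 < ℓ → ∀ (k : Fin ℓ → ℕ) (i : Fin ℓ → ℝ),
        (∀ j, 0 < k j) → (∀ j, i j ∈ I) → (∀ j, i j ≠ 0) →
        (∑ j, (k j : ℝ) * i j) = α → ∀ j, i j ∈ I₀ := by
  have hWF : I.IsWF := by
    rw [Set.isWF_iff_no_descending_seq]
    intro f hf hmem
    exact hDCC ⟨f, fun n => hmem n, fun n => hf (Nat.lt_succ_self n)⟩
  have hPWO : I.IsPWO := hWF.isPWO
  set I₀ : Set ℝ := {x | x ∈ I ∧ x ≠ 0 ∧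
      ∃ M : Multiset ℝ, (∀ y ∈ M, y ∈ I ∧ y ≠ 0) ∧ x ∈ M ∧ M.sum = α} with hI₀def
  have hsub : I₀ ⊆ I := fun x hx => hx.1
  have hfin : I₀.Finite := by
    by_contra hinf
    replace hinf : I₀.Infinite := hinf
    -- I \ {0} is nonempty
    have hWF' : (I \ {0}).IsWF := hWF.mono Set.diff_subset
    have hne : (I \ {0}).Nonempty := by
      obtain ⟨x, hx⟩ := hinf.nonempty
      exact ⟨x, hx.1, hx.2.1⟩
    set m : ℝ := hWF'.min hne with hm
    have hmmem : m ∈ I \ {0} := hWF'.min_mem hne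
    have hmpos : 0 < m := lt_of_le_of_ne (hI hmmem.1).1 (Ne.symm hmmem.2)
    have hmle : ∀ x ∈ I \ {0}, m ≤ x := fun x hx => hWF'.min_le hne hx
    set N : ℕ := ⌈α / m⌉₊ with hN
    have hcardN : ∀ M : Multiset ℝ, (∀ y ∈ M, y ∈ I ∧ y ≠ 0) → M.sum = α → M.card ≤ N := by
      intro M hM hsum
      have hlow : ∀ y ∈ M, m ≤ y := by
        intro y hy
        exact hmle y ⟨(hM y hy).1, (hM y hy).2⟩
      have h1 : M.card • m ≤ M.sum := Multiset.card_nsmul_le_sum hlow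
      rw [nsmul_eq_mul, hsum] at h1
      have h2 : (M.card : ℝ) ≤ α / m := (le_div_iff₀ hmpos).mpr h1
      have h3 : α / m ≤ (N : ℝ) := Nat.le_ceil _
      exact_mod_cast h2.trans h3
    -- extract strictly increasing sequence in I₀
    set e := hinf.natEmbedding with he
    set a : ℕ → ℝ := fun n => (e n : ℝ) with ha
    have haI₀ : ∀ n, a n ∈ I₀ := fun n => (e n).2
    have hainj : Function.Injective a := fun n₁ n₂ h => e.injective (Subtype.ext h)
    obtain ⟨g, hg⟩ := hPWO.exists_monotone_subseq (fun n => hsub (haI₀ n))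
    have hgsm : StrictMono (a ∘ g) :=
      hg.strictMono_of_injective (hainj.comp g.injective)
    apply no_descending_sums I hI hPWO N
    refine ⟨fun n => α - a (g n), ?_, ?_⟩
    · intro n
      obtain ⟨-, -, M', hM', hmem, hsumα⟩ := haI₀ (g n)
      refine ⟨M'.erase (a (g n)), ?_, ?_, ?_⟩
      · intro x hx
        exact hM' x (Multiset.mem_of_mem_erase hx)
      · exact le_trans (Multiset.card_erase_le) (hcardN M' hM' hsumα)
      · have h1 := Multiset.cons_erase hmem
        have h2 : ((a (g n)) ::ₘ M'.erase (a (g n))).sum = M'.sum := by rw [h1]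
        rw [Multiset.sum_cons, hsumα] at h2
        show (M'.erase (a (g n))).sum = α - a (g n)
        linarith
    · intro n
      have := hgsm (Nat.lt_succ_self n)
      show α - a (g (n + 1)) < α - a (g n)
      simp only [Function.comp] at this
      linarith
  refine ⟨I₀, hsub, hfin, ?_⟩
  intro ℓ hℓ k i hk hiI hi0 hsum j
  classical
  set M : Multiset ℝ := (Finset.univ.val : Multiset (Fin ℓ)).bind
    (fun j => Multiset.replicate (k j) (i j)) with hMdef
  have hmemM : ∀ x ∈ M, ∃ j, x = i j := by
    intro x hx
    rw [hMdef, Multiset.mem_bind] at hx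
    obtain ⟨j, -, hj⟩ := hx
    exact ⟨j, (Multiset.eq_of_mem_replicate hj)⟩
  have hok : ∀ y ∈ M, y ∈ I ∧ y ≠ 0 := by
    intro y hy
    obtain ⟨j', rfl⟩ := hmemM y hy
    exact ⟨hiI j', hi0 j'⟩
  have hiM : i j ∈ M := by
    rw [hMdef, Multiset.mem_bind]
    exact ⟨j, Finset.mem_univ_val j, Multiset.mem_replicate.mpr ⟨(hk j).ne', rfl⟩⟩
  have hMsum : M.sum = α := by
    rw [hMdef, Multiset.sum_bind]
    rw [← hsum]
    show (Finset.univ.val.map fun j => (Multiset.replicate (k j) (i j)).sum).sum = _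
    rw [Finset.sum]
    congr 1
    apply Multiset.map_congr rfl
    intro j' _
    rw [Multiset.sum_replicate, nsmul_eq_mul]
  exact ⟨hiI j, hi0 j, M, hok, hiM, hMsum⟩
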